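/- (Optimal value stability.) Let D and D̃ be dictionaries with ‖D − D̃‖_{1,2} ≤ λ, and let v_D(x) and v_{D̃}(x) denote the minimum values of the LASSO objectives for D and D̃ respectively at x ∈ ℝ^d. Then |v_D(x) − v_{D̃}(x)| ≤ (1/2)(1 + ‖x‖_2/4) ‖x‖_2³ · ‖D − D̃‖_{1,2} / λ. -/

import Mathlib

open Finset Matrix

noncomputable def norm2 {ι : Type*} [Fintype ι] (v : ι → ℝ) : ℝ :=
  Real.sqrt (∑ i, v i ^ 2)

noncomputable def norm1 {ι : Type*} [Fintype ι] (v : ι → ℝ) : ℝ :=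
  ∑ i, |v i|

noncomputable def norm0 {ι : Type*} (v : ι → ℝ) : ℕ :=
  Set.ncard {i | v i ≠ 0}

noncomputable def dot {ι : Type*} [Fintype ι] (u v : ι → ℝ) : ℝ :=
  ∑ i, u i * v i

def col {d m : ℕ} (D : Matrix (Fin d) (Fin m) ℝ) (i : Fin m) : Fin d → ℝ :=
  fun r => D r i

def IsDictionary {d m : ℕ} (D : Matrix (Fin d) (Fin m) ℝ) : Prop :=
  ∀ i, norm2 (_root_.col D i) = 1

noncomputable def norm12 {d m : ℕ} (E : Matrix (Fin d) (Fin m) ℝ) : ℝ :=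
  ⨆ i : Fin m, norm2 (_root_.col E i)

noncomputable def lassoObj {d m : ℕ} (lam : ℝ) (D : Matrix (Fin d) (Fin m) ℝ)
    (x : Fin d → ℝ) (z : Fin m → ℝ) : ℝ :=
  (1/2) * (norm2 (x - D.mulVec z))^2 + lam * norm1 z

def IsLassoMin {d m : ℕ} (lam : ℝ) (D : Matrix (Fin d) (Fin m) ℝ)
    (x : Fin d → ℝ) (a : Fin m → ℝ) : Prop :=
  ∀ z, lassoObj lam D x a ≤ lassoObj lam D x z

def Incoherent {d m : ℕ} (mu : ℝ) (D : Matrix (Fin d) (Fin m) ℝ) : Prop :=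
  ∀ i j, i ≠ j → |dot (_root_.col D i) (_root_.col D j)| ≤ mu / Real.sqrt d

noncomputable def kMargin {d m : ℕ} (lam : ℝ) (k : ℕ) (D : Matrix (Fin d) (Fin m) ℝ)
    (x : Fin d → ℝ) (a : Fin m → ℝ) : ℝ :=
  ⨆ I : {I : Finset (Fin m) // I.card = m - k},
    ⨅ j : {j : Fin m // j ∈ I.1}, (lam - |dot (_root_.col D j.1) (x - D.mulVec a)|)

/- ## Auxiliary lemmas -/

lemma norm2_eq_norm {d : ℕ} (v : Fin d → ℝ) :
    norm2 v = ‖(WithLp.equiv 2 (Fin d → ℝ)).symm v‖ := by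
  rw [EuclideanSpace.norm_eq]; simp [norm2, sq_abs]

lemma norm2_nonneg {ι : Type*} [Fintype ι] (v : ι → ℝ) : 0 ≤ norm2 v :=
  Real.sqrt_nonneg _

lemma norm1_nonneg {ι : Type*} [Fintype ι] (v : ι → ℝ) : 0 ≤ norm1 v :=
  Finset.sum_nonneg fun i _ => abs_nonneg _

lemma norm2_zero {d : ℕ} : norm2 (0 : Fin d → ℝ) = 0 := by
  simp [norm2]

lemma norm2_add_le {d : ℕ} (u v : Fin d → ℝ) : norm2 (u + v) ≤ norm2 u + norm2 v := by
  rw [norm2_eq_norm, norm2_eq_norm, norm2_eq_norm, WithLp.equiv_symm_apply, WithLp.toLp_add]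
  exact norm_add_le _ _

lemma norm2_smul {d : ℕ} (c : ℝ) (v : Fin d → ℝ) : norm2 (c • v) = |c| * norm2 v := by
  rw [norm2_eq_norm, norm2_eq_norm, WithLp.equiv_symm_apply, WithLp.toLp_smul, norm_smul, Real.norm_eq_abs]

lemma norm2_sum_le {d : ℕ} {α : Type*} (s : Finset α) (f : α → Fin d → ℝ) :
    norm2 (∑ a ∈ s, f a) ≤ ∑ a ∈ s, norm2 (f a) := by
  classical
  induction s using Finset.cons_induction with
  | empty => simp [norm2_zero]
  | cons a s ha ih =>
    rw [Finset.sum_cons, Finset.sum_cons]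
    exact le_trans (norm2_add_le _ _) (by linarith)

lemma le_norm12 {d m : ℕ} (E : Matrix (Fin d) (Fin m) ℝ) (i : Fin m) :
    norm2 (_root_.col E i) ≤ norm12 E := by
  unfold norm12
  exact le_ciSup (f := fun j => norm2 (_root_.col E j))
    (Set.Finite.bddAbove (Set.finite_range _)) i

lemma norm12_nonneg {d m : ℕ} (E : Matrix (Fin d) (Fin m) ℝ) : 0 ≤ norm12 E :=
  Real.iSup_nonneg fun i => norm2_nonneg _

lemma mulVec_eq_sum {d m : ℕ} (E : Matrix (Fin d) (Fin m) ℝ) (z : Fin m → ℝ) :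
    E.mulVec z = ∑ i, z i • _root_.col E i := by
  funext r
  simp [Matrix.mulVec, dotProduct, _root_.col, mul_comm]

lemma norm2_mulVec_le {d m : ℕ} (E : Matrix (Fin d) (Fin m) ℝ) (z : Fin m → ℝ) :
    norm2 (E.mulVec z) ≤ norm12 E * norm1 z := by
  rw [mulVec_eq_sum]
  refine le_trans (norm2_sum_le _ _) ?_
  have h : ∀ i ∈ Finset.univ, norm2 (z i • _root_.col E i) ≤ |z i| * norm12 E := by
    intro i _
    rw [norm2_smul]
    exact mul_le_mul_of_nonneg_left (le_norm12 E i) (abs_nonneg _)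
  refine le_trans (Finset.sum_le_sum h) ?_
  rw [← Finset.sum_mul, mul_comm]
  simp [norm1]

lemma norm2_neg {ι : Type*} [Fintype ι] (v : ι → ℝ) : norm2 (-v) = norm2 v := by
  simp [norm2]

lemma norm12_sub_symm {d m : ℕ} (D Dt : Matrix (Fin d) (Fin m) ℝ) :
    norm12 (D - Dt) = norm12 (Dt - D) := by
  unfold norm12
  congr 1
  funext i
  have : _root_.col (D - Dt) i = -(_root_.col (Dt - D) i) := by
    funext r; simp [_root_.col, Matrix.sub_apply]
  rw [this, norm2_neg]

lemma lassoObj_nonneg {d m : ℕ} {lam : ℝ} (hlam : 0 < lam)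
    (D : Matrix (Fin d) (Fin m) ℝ) (x : Fin d → ℝ) (z : Fin m → ℝ) :
    0 ≤ lassoObj lam D x z := by
  unfold lassoObj
  have h1 := sq_nonneg (norm2 (x - D.mulVec z))
  have h2 := norm1_nonneg z
  nlinarith

lemma lassoObj_zero {d m : ℕ} (lam : ℝ) (D : Matrix (Fin d) (Fin m) ℝ) (x : Fin d → ℝ) :
    lassoObj lam D x 0 = (1/2) * (norm2 x)^2 := by
  simp [lassoObj, norm1, Matrix.mulVec_zero]

lemma lasso_value_le {d m : ℕ} (lam : ℝ) (hlam : 0 < lam)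
    (D Dt : Matrix (Fin d) (Fin m) ℝ) (hclose : norm12 (D - Dt) ≤ lam) (x : Fin d → ℝ) :
    (⨅ z : Fin m → ℝ, lassoObj lam Dt x z)
      ≤ (⨅ z : Fin m → ℝ, lassoObj lam D x z)
        + (1/2) * (1 + norm2 x / 4) * (norm2 x)^3 * norm12 (D - Dt) / lam := by
  set X := norm2 x with hXdef
  set M := norm12 (D - Dt) with hMdef
  have hX : 0 ≤ X := norm2_nonneg x
  have hM : 0 ≤ M := norm12_nonneg _
  set B := (1/2) * (1 + X / 4) * X^3 * M / lam with hBdef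
  have hB : 0 ≤ B := by
    apply div_nonneg _ hlam.le
    have h4 : (0:ℝ) ≤ 1 + X / 4 := by linarith
    have h5 : (0:ℝ) ≤ X ^ 3 := pow_nonneg hX 3
    exact mul_nonneg (mul_nonneg (mul_nonneg (by norm_num) h4) h5) hM
  have hbdd : BddBelow (Set.range (lassoObj lam Dt x)) := by
    refine ⟨0, fun y hy => ?_⟩
    obtain ⟨z, hz⟩ := hy
    exact hz ▸ lassoObj_nonneg hlam Dt x z
  have hinf0 : (⨅ z : Fin m → ℝ, lassoObj lam Dt x z) ≤ (1/2) * X^2 := by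
    refine le_trans (ciInf_le hbdd 0) ?_
    rw [lassoObj_zero]
  rw [← sub_le_iff_le_add]
  refine le_ciInf fun z => ?_
  rw [sub_le_iff_le_add]
  have hinfz : (⨅ z : Fin m → ℝ, lassoObj lam Dt x z) ≤ lassoObj lam Dt x z :=
    ciInf_le hbdd z
  set v := (⨅ z : Fin m → ℝ, lassoObj lam Dt x z) with hv
  rcases le_total ((1/2) * X^2) (lassoObj lam D x z) with h | h
  · linarith
  · set a := norm2 (x - D.mulVec z) with hadef
    set b := norm2 (x - Dt.mulVec z) with hbdef2
    set c := norm2 ((D - Dt).mulVec z) with hcdef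
    set n1 := norm1 z with hn1
    have ha0 : 0 ≤ a := norm2_nonneg _
    have hb0 : 0 ≤ b := norm2_nonneg _
    have hc0 : 0 ≤ c := norm2_nonneg _
    have hn10 : 0 ≤ n1 := norm1_nonneg z
    have hobj : lassoObj lam D x z = (1/2) * a^2 + lam * n1 := rfl
    have hobjt : lassoObj lam Dt x z = (1/2) * b^2 + lam * n1 := rfl
    have hc : c ≤ M * n1 := norm2_mulVec_le _ z
    have hbac : b ≤ a + c := by
      have heq : x - Dt.mulVec z = (x - D.mulVec z) + (D - Dt).mulVec z := by
        rw [Matrix.sub_mulVec]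
        abel
      rw [hbdef2, heq]
      exact norm2_add_le _ _
    rw [hobj] at h ⊢
    rw [hobjt] at hinfz
    clear_value a b c n1 B X M v
    clear hobj hobjt hadef hbdef2 hcdef hn1 hv hbdd hMdef hXdef
    have h1 : lam * n1 ≤ X^2 / 2 := by nlinarith [sq_nonneg a]
    have ha : a ≤ X := by nlinarith
    have hlc : lam * c ≤ M * (X^2 / 2) := by
      have h2 : lam * c ≤ lam * (M * n1) := mul_le_mul_of_nonneg_left hc hlam.le
      have h3 : M * (lam * n1) ≤ M * (X^2 / 2) := mul_le_mul_of_nonneg_left h1 hM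
      nlinarith
    have hcX : c ≤ X^2 / 2 := by
      have : c ≤ lam * n1 := le_trans hc (mul_le_mul_of_nonneg_right hclose hn10)
      linarith
    have hkey : a * c + c^2 / 2 ≤ B := by
      rw [hBdef, le_div_iff₀ hlam]
      have h5 : a * (lam * c) ≤ X * (M * (X^2/2)) :=
        mul_le_mul ha hlc (mul_nonneg hlam.le hc0) hX
      have h6 : c * (lam * c) ≤ (X^2/2) * (M * (X^2/2)) :=
        mul_le_mul hcX hlc (mul_nonneg hlam.le hc0) (by positivity)
      nlinarith [h5, h6]
    have hb2 : b^2 ≤ (a + c)^2 := by nlinarith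
    nlinarith [hinfz, hb2, hkey]

/-- Optimal value stability. -/
theorem lasso_optimal_value_stability {d m : ℕ} (lam : ℝ) (hlam : 0 < lam)
    (D Dt : Matrix (Fin d) (Fin m) ℝ) (hD : IsDictionary D) (hDt : IsDictionary Dt)
    (hclose : norm12 (D - Dt) ≤ lam) (x : Fin d → ℝ) :
    |(⨅ z : Fin m → ℝ, lassoObj lam D x z) - (⨅ z : Fin m → ℝ, lassoObj lam Dt x z)|
      ≤ (1/2) * (1 + norm2 x / 4) * (norm2 x)^3 * norm12 (D - Dt) / lam := by
  have h1 := lasso_value_le lam hlam D Dt hclose x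
  have hclose' : norm12 (Dt - D) ≤ lam := by rw [← norm12_sub_symm]; exact hclose
  have h2 := lasso_value_le lam hlam Dt D hclose' x
  rw [norm12_sub_symm Dt D] at h2
  rw [abs_sub_le_iff]
  constructor <;> linarith
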